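/- Let V and U be vector spaces over a field of characteristic zero. Let R : V × V × V → U be a trilinear map, antisymmetric in its first two entries, which satisfies the algebraic Bianchi identity R(v₁, v₂, v₃) + R(v₂, v₃, v₁) + R(v₃, v₁, v₂) = 0 for all v₁, v₂, v₃ ∈ V. Then a trilinear map S : V × V × V → U which is symmetric in its last two entries satisfies 3R = Alt₂ S if and only if S = Sym_{2,3} R + σ for some fully symmetric trilinear map σ : V × V × V → U. -/
import Mathlib

private lemma vec_eta {V : Type*} (v : Fin 3 → V) : v = ![v 0, v 1, v 2] := by
  ext i; fin_cases i <;> rfl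

private lemma full_symm {K V U : Type*} [Field K] [AddCommGroup V] [Module K V]
    [AddCommGroup U] [Module K U]
    (σ : MultilinearMap K (fun _ : Fin 3 => V) U)
    (h12 : ∀ a b c : V, σ ![b, a, c] = σ ![a, b, c])
    (h23 : ∀ a b c : V, σ ![a, c, b] = σ ![a, b, c]) :
    ∀ τ : Equiv.Perm (Fin 3), ∀ v : Fin 3 → V, σ (fun i => v (τ i)) = σ v := by
  have h02 : ∀ a b c : V, σ ![c, b, a] = σ ![a, b, c] := by
    intro a b c
    rw [h12 b c a, h23 b a c, h12 a b c]
  have key : ∀ w : Fin 3 → V, σ w = σ ![w 0, w 1, w 2] := fun w => by rw [← vec_eta w]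
  have hswap : ∀ x y : Fin 3, ∀ v : Fin 3 → V,
      σ (fun i => v (Equiv.swap x y i)) = σ v := by
    intro x y v
    rw [key (fun i => v (Equiv.swap x y i)), key v]
    fin_cases x <;> fin_cases y <;>
      simp only [Equiv.swap_apply_def, Fin.isValue] <;> norm_num <;>
      first
        | rfl
        | exact h12 (v 0) (v 1) (v 2)
        | exact h02 (v 0) (v 1) (v 2)
        | exact h23 (v 0) (v 1) (v 2)
  intro τ
  refine Equiv.Perm.swap_induction_on τ (fun v => rfl) ?_
  intro f x y _ ih v
  have : (fun i => v ((Equiv.swap x y * f) i))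
      = fun i => (fun j => v (Equiv.swap x y j)) (f i) := rfl
  rw [this]
  exact (ih fun j => v (Equiv.swap x y j)).trans (hswap x y v)

theorem bianchi_alt2_characterization
    {K V U : Type*} [Field K] [CharZero K] [AddCommGroup V] [Module K V]
    [AddCommGroup U] [Module K U]
    (R S : MultilinearMap K (fun _ : Fin 3 => V) U)
    (hR : ∀ v₁ v₂ v₃ : V, R ![v₂, v₁, v₃] = - R ![v₁, v₂, v₃])
    (hBianchi : ∀ v₁ v₂ v₃ : V,
      R ![v₁, v₂, v₃] + R ![v₂, v₃, v₁] + R ![v₃, v₁, v₂] = 0)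
    (hS : ∀ v₁ v₂ v₃ : V, S ![v₁, v₂, v₃] = S ![v₁, v₃, v₂]) :
    (∀ v₁ v₂ v₃ : V,
      (3 : K) • R ![v₁, v₂, v₃] = S ![v₁, v₂, v₃] - S ![v₂, v₁, v₃]) ↔
    (∃ σ : MultilinearMap K (fun _ : Fin 3 => V) U,
      (∀ τ : Equiv.Perm (Fin 3), ∀ v : Fin 3 → V, σ (fun i => v (τ i)) = σ v) ∧
      ∀ v₁ v₂ v₃ : V,
        S ![v₁, v₂, v₃] = (R ![v₁, v₂, v₃] + R ![v₁, v₃, v₂]) + σ ![v₁, v₂, v₃]) := by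
  have h3 : ∀ u : U, (3 : K) • u = u + u + u := by
    intro u
    rw [show (3 : K) = 1 + 1 + 1 by norm_num, add_smul, add_smul, one_smul]
  -- consequence of Bianchi + antisymmetry: R(231) = -R(123) + R(132)
  have hB : ∀ a b c : V, R ![b, c, a] = - R ![a, b, c] + R ![a, c, b] := by
    intro a b c
    have h2' : R ![c, a, b] = - R ![a, c, b] := by rw [hR c a b, neg_neg]
    have h1 := hBianchi a b c
    rw [h2'] at h1
    rw [← sub_eq_zero, ← h1]
    abel
  constructor
  · intro hAlt
    set σ : MultilinearMap K (fun _ : Fin 3 => V) U :=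
      S - R - R.domDomCongr (Equiv.swap 1 2) with hσ
    have hσev : ∀ a b c : V, σ ![a, b, c] = S ![a, b, c] - R ![a, b, c] - R ![a, c, b] := by
      intro a b c
      have he : (fun i => (![a, b, c] : Fin 3 → V) (Equiv.swap (1 : Fin 3) 2 i))
          = ![a, c, b] := by
        funext i; fin_cases i <;> simp [Equiv.swap_apply_def]
      simp only [hσ, MultilinearMap.sub_apply, MultilinearMap.domDomCongr_apply, he]
    refine ⟨σ, full_symm σ ?_ ?_, ?_⟩
    · intro a b c
      have hS2 : S ![b, a, c]
          = S ![a, b, c] - (R ![a, b, c] + R ![a, b, c] + R ![a, b, c]) := by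
        rw [eq_sub_iff_add_eq, ← h3 (R ![a, b, c]), hAlt a b c]
        abel
      rw [hσev, hσev, hS2, hR a b c, hB a b c]
      abel
    · intro a b c
      rw [hσev, hσev, hS a b c]
      abel
    · intro a b c
      rw [hσev]; abel
  · rintro ⟨σ, hsym, hEq⟩
    intro a b c
    have h12 : σ ![b, a, c] = σ ![a, b, c] := by
      have h := hsym (Equiv.swap 0 1) ![a, b, c]
      have he : (fun i => (![a, b, c] : Fin 3 → V) (Equiv.swap (0 : Fin 3) 1 i))
          = ![b, a, c] := by
        funext i; fin_cases i <;> simp [Equiv.swap_apply_def]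
      rwa [he] at h
    rw [h3, hEq a b c, hEq b a c, h12, hR a b c, hB a b c]
    abel
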